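/- Let I, J ≥ 1 be integers, let μ ∈ ℝ^I and β ∈ ℝ^J be probability vectors with all entries strictly positive, let C ∈ ℝ^{I×J}, and let ε > 0, η > ε. For (a,b) ∈ ℝ^I × ℝ^J set D_{ij}(a,b) = exp((a_i + b_j − C_{ij})/ε), ν(b)_j = β_j exp(−b_j/(η−ε)) / Σ_k β_k exp(−b_k/(η−ε)), and F(a,b) = Σ_i μ_i a_i − ε Σ_{i,j} μ_i β_j D_{ij}(a,b) − (η−ε) log(Σ_j β_j exp(−b_j/(η−ε))). Then (a,b) ∈ ℝ^I × ℝ^J is a maximizer of F if and only if for every i: Σ_{j=1}^J β_j D_{ij}(a,b) = 1, and for every j: β_j Σ_{i=1}^I μ_i D_{ij}(a,b) = ν(b)_j. In particular, at any maximizer, Σ_{i,j} μ_i β_j D_{ij}(a,b) = 1. -/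

import Mathlib

open Real BigOperators Finset

/-- `D_{ij}(a,b) = exp((a_i + b_j − C_{ij})/ε)`. -/
noncomputable def Dmat {I J : ℕ} (C : Fin I → Fin J → ℝ) (ε : ℝ)
    (a : Fin I → ℝ) (b : Fin J → ℝ) (i : Fin I) (j : Fin J) : ℝ :=
  Real.exp ((a i + b j - C i j) / ε)

/-- The primal measure recovered from the dual variable `b`: softmax of `−b/(η−ε)`
with prior `β`. -/
noncomputable def nuOf {J : ℕ} (β : Fin J → ℝ) (ε η : ℝ) (b : Fin J → ℝ) (j : Fin J) : ℝ :=
  β j * Real.exp (-b j / (η - ε)) / ∑ k, β k * Real.exp (-b k / (η - ε))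

/-- The dual objective of the regularized Wasserstein estimator problem. -/
noncomputable def Fobj {I J : ℕ} (μ : Fin I → ℝ) (β : Fin J → ℝ)
    (C : Fin I → Fin J → ℝ) (ε η : ℝ) (a : Fin I → ℝ) (b : Fin J → ℝ) : ℝ :=
  ∑ i, μ i * a i - ε * ∑ i, ∑ j, μ i * β j * Dmat C ε a b i j
    - (η - ε) * Real.log (∑ j, β j * Real.exp (-b j / (η - ε)))


private lemma expb (x : ℝ) : (Real.exp x - 1) * (1 - x) ≤ x := by
  have h : Real.exp x * Real.exp (-x) = 1 := by
    rw [← Real.exp_add]; simp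
  nlinarith [mul_le_mul_of_nonneg_right (Real.add_one_le_exp (-x)) (Real.exp_pos x).le, h]

private lemma expb' {c : ℝ} (hc : 0 < c) (x : ℝ) : (Real.exp (x / c) - 1) * (c - x) ≤ x := by
  have h := expb (x / c)
  have h2 : (Real.exp (x/c) - 1) * (c - x) = c * ((Real.exp (x/c) - 1) * (1 - x/c)) := by
    field_simp
  rw [h2]
  calc c * ((Real.exp (x/c) - 1) * (1 - x/c)) ≤ c * (x/c) :=
        mul_le_mul_of_nonneg_left h hc.le
    _ = x := by field_simp


private lemma pert_a {I J : ℕ} (μ : Fin I → ℝ) (β : Fin J → ℝ)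
    (C : Fin I → Fin J → ℝ) (ε η : ℝ) (a : Fin I → ℝ) (b : Fin J → ℝ)
    (i : Fin I) (t : ℝ) :
    Fobj μ β C ε η (fun i' => a i' + if i' = i then t else 0) b
      = Fobj μ β C ε η a b + μ i * t
        - ε * (μ i * (∑ j, β j * Dmat C ε a b i j) * (Real.exp (t / ε) - 1)) := by
  unfold Fobj
  have h1 : ∑ i', μ i' * (a i' + if i' = i then t else 0)
      = (∑ i', μ i' * a i') + μ i * t := by
    simp [mul_add, Finset.sum_add_distrib, mul_ite, Finset.sum_ite_eq']
  have h2 : ∑ i', ∑ j, μ i' * β j * Dmat C ε (fun i'' => a i'' + if i'' = i then t else 0) b i' j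
      = (∑ i', ∑ j, μ i' * β j * Dmat C ε a b i' j)
        + μ i * (∑ j, β j * Dmat C ε a b i j) * (Real.exp (t/ε) - 1) := by
    have key : ∀ i', (∑ j, μ i' * β j * Dmat C ε (fun i'' => a i'' + if i'' = i then t else 0) b i' j)
        = (∑ j, μ i' * β j * Dmat C ε a b i' j)
          + (if i' = i then μ i * (∑ j, β j * Dmat C ε a b i j) * (Real.exp (t/ε) - 1) else 0) := by
      intro i'
      by_cases h : i' = i
      · subst h
        rw [if_pos rfl, Finset.mul_sum, Finset.sum_mul, ← Finset.sum_add_distrib]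
        refine Finset.sum_congr rfl (fun j _ => ?_)
        unfold Dmat
        simp only [eq_self_iff_true, if_true]
        rw [show a i' + t + b j - C i' j = (a i' + b j - C i' j) + t by ring, add_div, Real.exp_add]
        ring
      · simp only [if_neg h, add_zero]
        refine Finset.sum_congr rfl (fun j _ => ?_)
        unfold Dmat
        simp [h]
    rw [Finset.sum_congr rfl (fun i' _ => key i'), Finset.sum_add_distrib]
    simp [Finset.sum_ite_eq']
  rw [h1, h2]
  ring

private lemma pert_b {I J : ℕ} (μ : Fin I → ℝ) (β : Fin J → ℝ)
    (C : Fin I → Fin J → ℝ) (ε η : ℝ) (a : Fin I → ℝ) (b : Fin J → ℝ)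
    (j : Fin J) (t : ℝ) :
    Fobj μ β C ε η a (fun j' => b j' + if j' = j then t else 0)
      = Fobj μ β C ε η a b
        - ε * ((β j * ∑ i, μ i * Dmat C ε a b i j) * (Real.exp (t / ε) - 1))
        - (η - ε) * (Real.log ((∑ k, β k * Real.exp (-b k / (η - ε)))
            + β j * Real.exp (-b j / (η - ε)) * (Real.exp (-t / (η - ε)) - 1))
          - Real.log (∑ k, β k * Real.exp (-b k / (η - ε)))) := by
  unfold Fobj
  have h2 : ∑ i, ∑ j', μ i * β j' * Dmat C ε a (fun j'' => b j'' + if j'' = j then t else 0) i j'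
      = (∑ i, ∑ j', μ i * β j' * Dmat C ε a b i j')
        + (β j * ∑ i, μ i * Dmat C ε a b i j) * (Real.exp (t/ε) - 1) := by
    have key : ∀ i, (∑ j', μ i * β j' * Dmat C ε a (fun j'' => b j'' + if j'' = j then t else 0) i j')
        = (∑ j', μ i * β j' * Dmat C ε a b i j')
          + μ i * β j * Dmat C ε a b i j * (Real.exp (t/ε) - 1) := by
      intro i
      have key2 : ∀ j', μ i * β j' * Dmat C ε a (fun j'' => b j'' + if j'' = j then t else 0) i j'
          = μ i * β j' * Dmat C ε a b i j'
            + (if j' = j then μ i * β j * Dmat C ε a b i j * (Real.exp (t/ε) - 1) else 0) := by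
        intro j'
        by_cases h : j' = j
        · subst h
          unfold Dmat
          beta_reduce
          simp only [eq_self_iff_true, if_true]
          rw [show a i + (b j' + t) - C i j' = (a i + b j' - C i j') + t by ring, add_div,
            Real.exp_add]
          ring
        · unfold Dmat; simp [h]
      rw [Finset.sum_congr rfl (fun j' _ => key2 j'), Finset.sum_add_distrib]
      simp [Finset.sum_ite_eq']
    rw [Finset.sum_congr rfl (fun i _ => key i), Finset.sum_add_distrib]
    congr 1
    rw [Finset.mul_sum, Finset.sum_mul]
    exact Finset.sum_congr rfl fun i _ => by ring
  have h3 : ∑ k, β k * Real.exp (-(b k + if k = j then t else 0) / (η - ε))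
      = (∑ k, β k * Real.exp (-b k / (η - ε)))
        + β j * Real.exp (-b j/(η-ε)) * (Real.exp (-t/(η-ε)) - 1) := by
    have key : ∀ k, β k * Real.exp (-(b k + if k = j then t else 0) / (η - ε))
        = β k * Real.exp (-b k/(η-ε))
          + (if k = j then β j * Real.exp (-b j/(η-ε)) * (Real.exp (-t/(η-ε)) - 1) else 0) := by
      intro k; by_cases h : k = j
      · subst h; simp only [eq_self_iff_true, if_true]
        rw [show -(b k + t) = -b k + -t by ring, add_div, Real.exp_add]; ring
      · simp [h]
    rw [Finset.sum_congr rfl (fun k _ => key k), Finset.sum_add_distrib]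
    simp [Finset.sum_ite_eq']
  rw [h2, h3]
  ring

private lemma backward {I J : ℕ} (hJ : 1 ≤ J)
    (μ : Fin I → ℝ) (hμpos : ∀ i, 0 < μ i)
    (β : Fin J → ℝ) (hβpos : ∀ j, 0 < β j)
    (C : Fin I → Fin J → ℝ) (ε η : ℝ) (hε : 0 < ε) (hεη : ε < η)
    (a : Fin I → ℝ) (b : Fin J → ℝ)
    (h1 : ∀ i, ∑ j, β j * Dmat C ε a b i j = 1)
    (h2 : ∀ j, β j * ∑ i, μ i * Dmat C ε a b i j = nuOf β ε η b j)
    (a' : Fin I → ℝ) (b' : Fin J → ℝ) :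
    Fobj μ β C ε η a' b' ≤ Fobj μ β C ε η a b := by
  have hl : 0 < η - ε := by linarith
  have hJne : Nonempty (Fin J) := Fin.pos_iff_nonempty.mp hJ
  have hSpos : 0 < ∑ k, β k * Real.exp (-b k / (η - ε)) :=
    Finset.sum_pos (fun k _ => mul_pos (hβpos k) (Real.exp_pos _)) Finset.univ_nonempty
  set m := ∑ k, nuOf β ε η b k * ((b k - b' k) / (η - ε)) with hm
  have hnu : ∀ k, β k * Real.exp (-b k / (η - ε))
      = nuOf β ε η b k * (∑ k, β k * Real.exp (-b k / (η - ε))) := by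
    intro k; unfold nuOf; rw [div_mul_cancel₀ _ hSpos.ne']
  have hNsum : ∑ k, nuOf β ε η b k = 1 := by
    unfold nuOf; rw [← Finset.sum_div]; exact div_self hSpos.ne'
  -- log-sum-exp gradient inequality
  have key : (∑ k, β k * Real.exp (-b k / (η - ε))) * Real.exp m
      ≤ ∑ k, β k * Real.exp (-b' k / (η - ε)) := by
    have pt : ∀ k, β k * Real.exp (-b k / (η - ε))
        * (Real.exp m * (1 + ((b k - b' k) / (η - ε) - m)))
        ≤ β k * Real.exp (-b' k / (η - ε)) := by
      intro k
      have e1 : Real.exp (-b' k / (η - ε))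
          = Real.exp (-b k / (η - ε)) * (Real.exp m * Real.exp ((b k - b' k) / (η - ε) - m)) := by
        rw [← Real.exp_add, ← Real.exp_add]
        congr 1
        rw [show -b' k = -b k + (b k - b' k) by ring, add_div]
        ring
      have e3 := Real.add_one_le_exp ((b k - b' k) / (η - ε) - m)
      rw [e1]
      have hx : 0 ≤ β k * Real.exp (-b k / (η - ε)) * Real.exp m := by
        have := hβpos k; positivity
      nlinarith [mul_le_mul_of_nonneg_left e3 hx]
    have hsum := Finset.sum_le_sum (fun k (_ : k ∈ Finset.univ) => pt k)
    have hid : ∑ k, β k * Real.exp (-b k / (η - ε))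
        * (Real.exp m * (1 + ((b k - b' k) / (η - ε) - m)))
        = (∑ k, β k * Real.exp (-b k / (η - ε))) * Real.exp m := by
      calc ∑ k, β k * Real.exp (-b k / (η - ε))
            * (Real.exp m * (1 + ((b k - b' k) / (η - ε) - m)))
          = ∑ k, (∑ k', β k' * Real.exp (-b k' / (η - ε))) * Real.exp m
              * (nuOf β ε η b k * (1 + ((b k - b' k) / (η - ε) - m))) := by
            refine Finset.sum_congr rfl fun k _ => ?_
            rw [hnu k]; ring
        _ = (∑ k', β k' * Real.exp (-b k' / (η - ε))) * Real.exp m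
              * (∑ k, nuOf β ε η b k * (1 + ((b k - b' k) / (η - ε) - m))) := by
            rw [Finset.mul_sum]
        _ = (∑ k', β k' * Real.exp (-b k' / (η - ε))) * Real.exp m := by
            have : ∑ k, nuOf β ε η b k * (1 + ((b k - b' k) / (η - ε) - m))
                = (∑ k, nuOf β ε η b k) + ((∑ k, nuOf β ε η b k * ((b k - b' k) / (η - ε)))
                  - m * ∑ k, nuOf β ε η b k) := by
              rw [Finset.mul_sum, ← Finset.sum_sub_distrib, ← Finset.sum_add_distrib]
              refine Finset.sum_congr rfl fun k _ => by ring
            rw [this, hNsum, ← hm]; ring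
    linarith [hsum, hid.symm.le]
  have hlog : Real.log (∑ k, β k * Real.exp (-b k / (η - ε))) + m
      ≤ Real.log (∑ k, β k * Real.exp (-b' k / (η - ε))) := by
    have h := Real.log_le_log (by positivity) key
    rwa [Real.log_mul hSpos.ne' (Real.exp_pos m).ne', Real.log_exp] at h
  -- pointwise exponential gradient inequality
  have hD : ∀ i j, ε * (μ i * β j * Dmat C ε a b i j)
      + μ i * β j * Dmat C ε a b i j * ((a' i - a i) + (b' j - b j))
      ≤ ε * (μ i * β j * Dmat C ε a' b' i j) := by
    intro i j
    have e1 : Dmat C ε a' b' i j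
        = Dmat C ε a b i j * Real.exp (((a' i - a i) + (b' j - b j)) / ε) := by
      unfold Dmat
      rw [← Real.exp_add, ← add_div]
      ring_nf
    have e3 := Real.add_one_le_exp (((a' i - a i) + (b' j - b j)) / ε)
    have hdiv : ε * (((a' i - a i) + (b' j - b j)) / ε) = (a' i - a i) + (b' j - b j) :=
      mul_div_cancel₀ _ hε.ne'
    have hx : 0 ≤ μ i * β j * Dmat C ε a b i j := by
      have h5 : 0 < Dmat C ε a b i j := Real.exp_pos _
      have h6 := hβpos j; have h7 := hμpos i
      positivity
    rw [e1]
    nlinarith [mul_le_mul_of_nonneg_left e3 hx, hdiv, hε,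
      mul_le_mul_of_nonneg_left (mul_le_mul_of_nonneg_left e3 hx) hε.le]
  -- sum the middle-term inequality
  have hT : ∑ i, ∑ j, (ε * (μ i * β j * Dmat C ε a b i j)
      + μ i * β j * Dmat C ε a b i j * ((a' i - a i) + (b' j - b j)))
      ≤ ∑ i, ∑ j, ε * (μ i * β j * Dmat C ε a' b' i j) :=
    Finset.sum_le_sum fun i _ => Finset.sum_le_sum fun j _ => hD i j
  have e4 : ∑ i, ∑ j, ε * (μ i * β j * Dmat C ε a' b' i j)
      = ε * ∑ i, ∑ j, μ i * β j * Dmat C ε a' b' i j := by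
    rw [Finset.mul_sum]
    exact Finset.sum_congr rfl fun i _ => (Finset.mul_sum _ _ _).symm
  have I1 : ∑ i, ∑ j, μ i * β j * Dmat C ε a b i j * (a' i - a i)
      = ∑ i, μ i * (a' i - a i) := by
    refine Finset.sum_congr rfl fun i _ => ?_
    calc ∑ j, μ i * β j * Dmat C ε a b i j * (a' i - a i)
        = (μ i * (a' i - a i)) * ∑ j, β j * Dmat C ε a b i j := by
          rw [Finset.mul_sum]
          exact Finset.sum_congr rfl fun j _ => by ring
      _ = μ i * (a' i - a i) := by rw [h1 i, mul_one]
  have I2 : ∑ i, ∑ j, μ i * β j * Dmat C ε a b i j * (b' j - b j)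
      = ∑ j, nuOf β ε η b j * (b' j - b j) := by
    rw [Finset.sum_comm]
    refine Finset.sum_congr rfl fun j _ => ?_
    calc ∑ i, μ i * β j * Dmat C ε a b i j * (b' j - b j)
        = (β j * ∑ i, μ i * Dmat C ε a b i j) * (b' j - b j) := by
          rw [Finset.mul_sum, Finset.sum_mul]
          exact Finset.sum_congr rfl fun i _ => by ring
      _ = nuOf β ε η b j * (b' j - b j) := by rw [h2 j]
  have e5 : ∑ i, ∑ j, (ε * (μ i * β j * Dmat C ε a b i j)
      + μ i * β j * Dmat C ε a b i j * ((a' i - a i) + (b' j - b j)))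
      = ε * (∑ i, ∑ j, μ i * β j * Dmat C ε a b i j)
        + (∑ i, μ i * (a' i - a i)) + (∑ j, nuOf β ε η b j * (b' j - b j)) := by
    have pw : ∀ i : Fin I, ∑ j, (ε * (μ i * β j * Dmat C ε a b i j)
        + μ i * β j * Dmat C ε a b i j * ((a' i - a i) + (b' j - b j)))
        = (∑ j, ε * (μ i * β j * Dmat C ε a b i j))
          + (∑ j, μ i * β j * Dmat C ε a b i j * (a' i - a i))
          + (∑ j, μ i * β j * Dmat C ε a b i j * (b' j - b j)) := by
      intro i
      rw [← Finset.sum_add_distrib, ← Finset.sum_add_distrib]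
      exact Finset.sum_congr rfl fun j _ => by ring
    rw [Finset.sum_congr rfl fun i _ => pw i, Finset.sum_add_distrib, Finset.sum_add_distrib]
    rw [I1, I2]
    congr 1
    congr 1
    rw [Finset.mul_sum]
    exact Finset.sum_congr rfl fun i _ => (Finset.mul_sum _ _ _).symm
  have hmid : ε * (∑ i, ∑ j, μ i * β j * Dmat C ε a b i j)
      + (∑ i, μ i * (a' i - a i)) + (∑ j, nuOf β ε η b j * (b' j - b j))
      ≤ ε * ∑ i, ∑ j, μ i * β j * Dmat C ε a' b' i j := by
    rw [← e5, ← e4]; exact hT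
  -- first term
  have hA : ∑ i, μ i * a' i = (∑ i, μ i * a i) + ∑ i, μ i * (a' i - a i) := by
    rw [← Finset.sum_add_distrib]
    exact Finset.sum_congr rfl fun i _ => by ring
  -- l * m
  have hlm : (η - ε) * m = - ∑ j, nuOf β ε η b j * (b' j - b j) := by
    rw [hm, Finset.mul_sum, ← Finset.sum_neg_distrib]
    refine Finset.sum_congr rfl fun k _ => ?_
    field_simp
    ring
  unfold Fobj
  have hlog' : (η - ε) * (Real.log (∑ k, β k * Real.exp (-b k / (η - ε))) + m)
      ≤ (η - ε) * Real.log (∑ k, β k * Real.exp (-b' k / (η - ε))) :=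
    mul_le_mul_of_nonneg_left hlog hl.le
  nlinarith [hmid, hA, hlm, hlog']

set_option maxHeartbeats 1000000 in
/-- **first-order optimality conditions.** `(a,b)` maximizes `F` iff
`∑_j β_j D_{ij} = 1` for all `i` and `β_j ∑_i μ_i D_{ij} = ν(b)_j` for all `j`;
in particular, at any maximizer `∑_{i,j} μ_i β_j D_{ij} = 1`. -/
theorem dual_first_order_conditions (I J : ℕ) (hI : 1 ≤ I) (hJ : 1 ≤ J)
    (μ : Fin I → ℝ) (hμpos : ∀ i, 0 < μ i) (hμsum : ∑ i, μ i = 1)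
    (β : Fin J → ℝ) (hβpos : ∀ j, 0 < β j) (hβsum : ∑ j, β j = 1)
    (C : Fin I → Fin J → ℝ) (ε η : ℝ) (hε : 0 < ε) (hεη : ε < η) :
    (∀ (a : Fin I → ℝ) (b : Fin J → ℝ),
      (∀ (a' : Fin I → ℝ) (b' : Fin J → ℝ), Fobj μ β C ε η a' b' ≤ Fobj μ β C ε η a b) ↔
        ((∀ i, ∑ j, β j * Dmat C ε a b i j = 1) ∧
          (∀ j, β j * ∑ i, μ i * Dmat C ε a b i j = nuOf β ε η b j))) ∧
    (∀ (a : Fin I → ℝ) (b : Fin J → ℝ),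
      (∀ (a' : Fin I → ℝ) (b' : Fin J → ℝ), Fobj μ β C ε η a' b' ≤ Fobj μ β C ε η a b) →
        ∑ i, ∑ j, μ i * β j * Dmat C ε a b i j = 1) := by
  have hl : 0 < η - ε := by linarith
  have hJne : Nonempty (Fin J) := Fin.pos_iff_nonempty.mp hJ
  have hIne : Nonempty (Fin I) := Fin.pos_iff_nonempty.mp hI
  have main : ∀ (a : Fin I → ℝ) (b : Fin J → ℝ),
      (∀ (a' : Fin I → ℝ) (b' : Fin J → ℝ), Fobj μ β C ε η a' b' ≤ Fobj μ β C ε η a b) ↔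
        ((∀ i, ∑ j, β j * Dmat C ε a b i j = 1) ∧
          (∀ j, β j * ∑ i, μ i * Dmat C ε a b i j = nuOf β ε η b j)) := by
    intro a b
    constructor
    · intro hmax
      constructor
      · -- first-order condition in a
        intro i
        obtain ⟨s, hs⟩ : ∃ s, s = ∑ j, β j * Dmat C ε a b i j := ⟨_, rfl⟩
        rw [← hs]
        have hspos : 0 < s := by
          rw [hs]
          exact Finset.sum_pos (fun j _ => mul_pos (hβpos j) (Real.exp_pos _))
            Finset.univ_nonempty
        obtain ⟨t, ht⟩ : ∃ t, t = ε * (1 - s) / 2 := ⟨_, rfl⟩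
        have h := hmax (fun i' => a i' + if i' = i then t else 0) b
        rw [pert_a μ β C ε η a b i t, ← hs] at h
        obtain ⟨E, hE⟩ : ∃ E, E = Real.exp (t / ε) - 1 := ⟨_, rfl⟩
        rw [← hE] at h
        have h' : t - ε * s * E ≤ 0 := by nlinarith [h, hμpos i]
        have hb : E * (ε - t) ≤ t := by rw [hE]; exact expb' hε t
        have hpos : 0 < ε - t := by rw [ht]; nlinarith [mul_pos hε hspos]
        have ht4 : ε * s * t = ε * t - 2 * (t * t) := by rw [ht]; ring
        have htt : t * t ≤ 0 := by
          nlinarith [mul_le_mul_of_nonneg_left hb (mul_pos hε hspos).le,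
            mul_le_mul_of_nonneg_right h' hpos.le, ht4]
        have ht0 : t = 0 := mul_self_eq_zero.mp (le_antisymm htt (mul_self_nonneg t))
        rw [ht] at ht0
        have hz : ε * (1 - s) = 0 := by linarith
        rcases mul_eq_zero.mp hz with h9 | h9
        · exact absurd h9 hε.ne'
        · linarith
      · -- first-order condition in b
        intro j
        obtain ⟨S, hS⟩ : ∃ S, S = ∑ k, β k * Real.exp (-b k / (η - ε)) := ⟨_, rfl⟩
        have hSpos : 0 < S := by
          rw [hS]
          exact Finset.sum_pos (fun k _ => mul_pos (hβpos k) (Real.exp_pos _))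
            Finset.univ_nonempty
        obtain ⟨w, hw⟩ : ∃ w, w = β j * Real.exp (-b j / (η - ε)) := ⟨_, rfl⟩
        have hwpos : 0 < w := by rw [hw]; exact mul_pos (hβpos j) (Real.exp_pos _)
        have hwS : w ≤ S := by
          rw [hS, hw]
          exact Finset.single_le_sum (f := fun k => β k * Real.exp (-b k / (η - ε)))
            (fun k _ => (mul_pos (hβpos k) (Real.exp_pos _)).le) (Finset.mem_univ j)
        obtain ⟨c, hc⟩ : ∃ c, c = β j * ∑ i, μ i * Dmat C ε a b i j := ⟨_, rfl⟩
        rw [← hc]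
        have hcpos : 0 < c := by
          rw [hc]
          exact mul_pos (hβpos j) (Finset.sum_pos
            (fun i _ => mul_pos (hμpos i) (Real.exp_pos _)) Finset.univ_nonempty)
        obtain ⟨n, hn⟩ : ∃ n, n = w / S := ⟨_, rfl⟩
        have hnpos : 0 < n := by rw [hn]; exact div_pos hwpos hSpos
        have hnu : nuOf β ε η b j = n := by rw [hn, hw, hS]; rfl
        rw [hnu]
        obtain ⟨M, hM⟩ : ∃ M, M = n * (η - ε) + c * ε := ⟨_, rfl⟩
        have hMpos : 0 < M := by rw [hM]; positivity
        obtain ⟨t, ht⟩ : ∃ t, t = ε * (η - ε) * (n - c) / (2 * M) := ⟨_, rfl⟩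
        have ht2 : t * (2 * M) = ε * (η - ε) * (n - c) := by
          rw [ht]; field_simp
        have hQ : 0 < ε - t := by
          have h5 : t * (2 * M) < ε * (2 * M) := by
            rw [ht2, hM]
            nlinarith [mul_pos (mul_pos hε hnpos) hl, mul_pos (mul_pos hε hcpos) hl,
              mul_pos (mul_pos hcpos hε) hε]
          have := lt_of_mul_lt_mul_right h5 (by positivity : (0:ℝ) ≤ 2 * M)
          linarith
        have hP : 0 < (η - ε) + t := by
          have h5 : (-t) * (2 * M) < (η - ε) * (2 * M) := by
            have he : (-t) * (2 * M) = -(ε * (η - ε) * (n - c)) := by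
              rw [← ht2]; ring
            rw [he, hM]
            nlinarith [mul_pos hnpos (mul_pos hl hl), mul_pos (mul_pos hcpos hε) hl,
              mul_pos (mul_pos hε hnpos) hl]
          have := lt_of_mul_lt_mul_right h5 (by positivity : (0:ℝ) ≤ 2 * M)
          linarith
        have h := hmax a (fun j' => b j' + if j' = j then t else 0)
        rw [pert_b μ β C ε η a b j t, ← hc, ← hw, ← hS] at h
        obtain ⟨E, hE⟩ : ∃ E, E = Real.exp (t / ε) - 1 := ⟨_, rfl⟩
        obtain ⟨E₂, hE2⟩ : ∃ E₂, E₂ = Real.exp (-t / (η - ε)) - 1 := ⟨_, rfl⟩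
        rw [← hE, ← hE2] at h
        have harg : 0 < S + w * E₂ := by
          have he : S + w * E₂ = (S - w) + w * Real.exp (-t / (η - ε)) := by
            rw [hE2]; ring
          rw [he]
          nlinarith [Real.exp_pos (-t / (η - ε))]
        have hlog : Real.log (S + w * E₂) - Real.log S ≤ w * E₂ / S := by
          have hd : Real.log (S + w * E₂) - Real.log S = Real.log ((S + w * E₂) / S) :=
            (Real.log_div harg.ne' hSpos.ne').symm
          rw [hd]
          have h6 := Real.log_le_sub_one_of_pos (show 0 < (S + w * E₂) / S by positivity)
          have h7 : (S + w * E₂) / S - 1 = w * E₂ / S := by field_simp; ring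
          linarith
        have h10 : w * E₂ / S = n * E₂ := by rw [hn]; field_simp
        have h0 : 0 ≤ ε * c * E + (η - ε) * n * E₂ := by
          have h8 : 0 ≤ ε * (c * E) + (η - ε) * (Real.log (S + w * E₂) - Real.log S) := by
            linarith [h]
          have h9 : (η - ε) * (Real.log (S + w * E₂) - Real.log S)
              ≤ (η - ε) * (w * E₂ / S) := mul_le_mul_of_nonneg_left hlog hl.le
          rw [h10] at h9
          nlinarith [h8, h9]
        have hb1 : E * (ε - t) ≤ t := by rw [hE]; exact expb' hε t
        have hb2 : E₂ * ((η - ε) + t) ≤ -t := by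
          have h11 := expb' hl (-t)
          rw [hE2]
          calc (Real.exp (-t / (η - ε)) - 1) * ((η - ε) + t)
              = (Real.exp (-t / (η - ε)) - 1) * ((η - ε) - (-t)) := by ring
            _ ≤ -t := h11
        have k1 : ε * c * E * (ε - t) ≤ ε * c * t := by
          nlinarith [mul_le_mul_of_nonneg_left hb1 (mul_pos hε hcpos).le]
        have k2 : (η - ε) * n * E₂ * ((η - ε) + t) ≤ (η - ε) * n * (-t) := by
          nlinarith [mul_le_mul_of_nonneg_left hb2 (mul_pos hl hnpos).le]
        have h5 : 0 ≤ ε * c * t * ((η - ε) + t) - (η - ε) * n * t * (ε - t) := by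
          nlinarith [mul_nonneg (mul_nonneg h0 hQ.le) hP.le,
            mul_le_mul_of_nonneg_right k1 hP.le,
            mul_le_mul_of_nonneg_right k2 hQ.le]
        have hM2 : t * t * M = t * t * (n * (η - ε) + c * ε) := by rw [← hM]
        have h6 : 0 ≤ t * (t * M - ε * (η - ε) * (n - c)) := by nlinarith [h5, hM2]
        have ht3 : t * (ε * (η - ε) * (n - c)) = 2 * (t * t) * M := by rw [← ht2]; ring
        have h7 : t * t * M ≤ 0 := by nlinarith [h6, ht3]
        have htt0 : t * t = 0 := by
          have h8 : t * t ≤ 0 := by nlinarith [h7, hMpos, mul_self_nonneg t]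
          exact le_antisymm h8 (mul_self_nonneg t)
        have ht0 : t = 0 := mul_self_eq_zero.mp htt0
        have hz : ε * (η - ε) * (n - c) = 0 := by rw [← ht2, ht0]; ring
        have hεl : ε * (η - ε) ≠ 0 := by positivity
        have := (mul_eq_zero.mp hz).resolve_left hεl
        linarith
    · rintro ⟨h1, h2⟩ a' b'
      exact backward hJ μ hμpos β hβpos C ε η hε hεη a b h1 h2 a' b'
  refine ⟨main, fun a b h => ?_⟩
  obtain ⟨h1, _⟩ := (main a b).mp h
  calc ∑ i, ∑ j, μ i * β j * Dmat C ε a b i j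
      = ∑ i, μ i * ∑ j, β j * Dmat C ε a b i j := by
        refine Finset.sum_congr rfl fun i _ => ?_
        rw [Finset.mul_sum]
        exact Finset.sum_congr rfl fun j _ => by ring
    _ = ∑ i, μ i := by
        refine Finset.sum_congr rfl fun i _ => ?_
        rw [h1 i, mul_one]
    _ = 1 := hμsum
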